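/- Let P be a probability measure on Ω₁ × Ω₂ with marginal P₁, let U ⊆ Ω₁ × Ω₂ be open, and let α₁ ∈ Ω₁ be such that the conditional measure Q = P(· | α₁) exists as a limit of conditional measures over shrinking cylinders around α₁ (in the sense that Q(J) = lim_n P([α₁↾n] × J)/P₁([α₁↾n]) for every cylinder J ⊆ Ω₂, with all denominators positive, and Q extends to a Borel probability measure). If α₁ is not contained in any n-heavy cylinder (i.e., P(U ∩ ([α₁↾n] × Ω₂)) ≤ 2^{-n} P₁([α₁↾n]) for all n), then Q of the α₁-section {β : (α₁, β) ∈ U} is at most 2^{-n}. -/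

import Mathlib

open MeasureTheory Set Filter Topology

abbrev Cantor : Type := ℕ → Bool

def cyl (a : List Bool) : Set Cantor := {ω | ∀ i : Fin a.length, ω i = a.get i}

def pref (ω : Cantor) (n : ℕ) : List Bool := List.ofFn fun i : Fin n => ω i

lemma mem_cyl_ofFn {L : ℕ} (σ : Fin L → Bool) (ω : Cantor) :
    ω ∈ cyl (List.ofFn σ) ↔ ∀ i : Fin L, ω i = σ i := by
  constructor
  · intro h i
    simpa [List.get_ofFn] using h (Fin.cast (List.length_ofFn (f := σ)).symm i)
  · intro h i
    simpa [List.get_ofFn, Fin.cast] using h (Fin.cast (List.length_ofFn (f := σ)) i)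

lemma mem_cyl_pref (β ω : Cantor) (L : ℕ) :
    ω ∈ cyl (pref β L) ↔ ∀ i : Fin L, ω i = β i := mem_cyl_ofFn _ _

lemma self_mem_cyl_pref (β : Cantor) (L : ℕ) : β ∈ cyl (pref β L) :=
  (mem_cyl_pref β β L).2 fun _ => rfl

lemma pref_eq_ofFn_of_mem {L : ℕ} {σ : Fin L → Bool} {ω : Cantor}
    (h : ω ∈ cyl (List.ofFn σ)) : pref ω L = List.ofFn σ := by
  unfold pref
  rw [List.ofFn_inj]
  funext i
  exact (mem_cyl_ofFn σ ω).1 h i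

lemma cyl_pref_anti (β : Cantor) {L L' : ℕ} (h : L ≤ L') :
    cyl (pref β L') ⊆ cyl (pref β L) := by
  intro ω hω
  rw [mem_cyl_pref] at *
  intro i
  exact hω ⟨i.1, lt_of_lt_of_le i.2 h⟩

lemma cyl_eq_iInter (a : List Bool) :
    cyl a = ⋂ i : Fin a.length, (fun ω : Cantor => ω i) ⁻¹' {a.get i} := by
  ext ω; simp [cyl]

lemma measurableSet_cyl (a : List Bool) : MeasurableSet (cyl a) := by
  rw [cyl_eq_iInter]
  exact MeasurableSet.iInter fun i =>
    (measurable_pi_apply (i : ℕ)) (measurableSet_singleton _)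

lemma isClosed_cyl (a : List Bool) : IsClosed (cyl a) := by
  rw [cyl_eq_iInter]
  exact isClosed_iInter fun i =>
    (isClosed_singleton).preimage (continuous_apply (i : ℕ))

lemma isCompact_cyl (a : List Bool) : IsCompact (cyl a) :=
  (isClosed_cyl a).isCompact

lemma exists_cyl_subset {S : Set Cantor} (hS : IsOpen S) {β : Cantor} (hβ : β ∈ S) :
    ∃ L, cyl (pref β L) ⊆ S := by
  obtain ⟨I, u, hu, hsub⟩ := isOpen_pi_iff.mp hS β hβ
  refine ⟨I.sup id + 1, fun ω hω => hsub ?_⟩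
  intro i hi
  have hlt : (i : ℕ) < I.sup id + 1 := Nat.lt_succ_of_le (Finset.le_sup (f := id) hi)
  have : ω i = β i := (mem_cyl_pref β ω _).1 hω ⟨i, hlt⟩
  rw [this]; exact (hu i hi).2

lemma exists_tube {U : Set (Cantor × Cantor)} (hU : IsOpen U) (α1 : Cantor)
    {C : Set Cantor} (hC : IsCompact C) (h : ∀ β ∈ C, (α1, β) ∈ U) :
    ∃ M, ∀ m ≥ M, cyl (pref α1 m) ×ˢ C ⊆ U := by
  have hsub : ({α1} : Set Cantor) ×ˢ C ⊆ U := by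
    rintro ⟨a, b⟩ ⟨ha, hb⟩
    simp only [mem_singleton_iff] at ha
    subst ha; exact h b hb
  obtain ⟨u, v, huo, _, hau, hCv, huv⟩ :=
    generalized_tube_lemma isCompact_singleton hC hU hsub
  obtain ⟨M, hM⟩ := exists_cyl_subset huo (hau rfl)
  refine ⟨M, fun m hm => ?_⟩
  rintro ⟨a, b⟩ ⟨ha, hb⟩
  exact huv ⟨hM (cyl_pref_anti α1 hm ha), hCv hb⟩

/-- Section lemma: if no prefix cylinder of `α₁` is `n`-heavy for the open set
`U`, then the conditional measure of the `α₁`-section of `U` is at most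
`2^{-n}`. -/
theorem stmt_7 (P : Measure (Cantor × Cantor)) [IsProbabilityMeasure P]
    (P1 : Measure Cantor) (hP1 : P1 = P.map Prod.fst)
    (U : Set (Cantor × Cantor)) (hUopen : IsOpen U)
    (α1 : Cantor) (hpos : ∀ m : ℕ, 0 < P1 (cyl (pref α1 m)))
    (Q : Measure Cantor) [IsProbabilityMeasure Q]
    (hQ : ∀ J : List Bool,
      Tendsto (fun m : ℕ =>
          (P (cyl (pref α1 m) ×ˢ cyl J)).toReal / (P1 (cyl (pref α1 m))).toReal)
        atTop (𝓝 (Q (cyl J)).toReal))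
    (n : ℕ)
    (hlight : ∀ m : ℕ,
      P (U ∩ (cyl (pref α1 m) ×ˢ (univ : Set Cantor))) ≤
        2⁻¹ ^ n * P1 (cyl (pref α1 m))) :
    Q {β : Cantor | (α1, β) ∈ U} ≤ 2⁻¹ ^ n := by
  classical
  have hP1prob : IsProbabilityMeasure P1 := by
    rw [hP1]; exact Measure.isProbabilityMeasure_map measurable_fst.aemeasurable
  set S : Set Cantor := {β : Cantor | (α1, β) ∈ U} with hSdef
  have hSopen : IsOpen S := hUopen.preimage (Continuous.prodMk_right α1)
  set V : ℕ → Set Cantor := fun L => {β | cyl (pref β L) ⊆ S} with hVdef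
  have hVmono : Monotone V := fun L L' h β hβ => (cyl_pref_anti β h).trans hβ
  have hVS : ∀ L, V L ⊆ S := fun L β hβ => hβ (self_mem_cyl_pref β L)
  have hSV : S = ⋃ L, V L := by
    ext β
    constructor
    · intro hβ
      obtain ⟨L, hL⟩ := exists_cyl_subset hSopen hβ
      exact mem_iUnion.2 ⟨L, hL⟩
    · intro hβ
      obtain ⟨L, hL⟩ := mem_iUnion.1 hβ
      exact hVS L hL
  have key : ∀ L, Q (V L) ≤ 2⁻¹ ^ n := by
    intro L
    set G : Finset (Fin L → Bool) :=
      Finset.univ.filter (fun σ => cyl (List.ofFn σ) ⊆ S) with hG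
    have hGmem : ∀ σ, σ ∈ G ↔ cyl (List.ofFn σ) ⊆ S := by simp [hG]
    have hVU : V L = ⋃ σ ∈ G, cyl (List.ofFn σ) := by
      ext β
      simp only [mem_iUnion]
      constructor
      · intro hβ
        exact ⟨fun i => β i, (hGmem _).2 hβ, (mem_cyl_ofFn _ _).2 fun i => rfl⟩
      · rintro ⟨σ, hσ, hβ⟩
        show cyl (pref β L) ⊆ S
        rw [show pref β L = List.ofFn σ from pref_eq_ofFn_of_mem hβ]
        exact (hGmem σ).1 hσ
    have hdisj : (↑G : Set (Fin L → Bool)).PairwiseDisjoint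
        (fun σ => cyl (List.ofFn σ)) := by
      intro σ _ τ _ hστ
      refine Set.disjoint_left.2 fun ω hσω hτω => hστ ?_
      funext i
      rw [← (mem_cyl_ofFn σ ω).1 hσω i, ← (mem_cyl_ofFn τ ω).1 hτω i]
    have hQsum : Q (V L) = ∑ σ ∈ G, Q (cyl (List.ofFn σ)) := by
      rw [hVU]
      exact measure_biUnion_finset hdisj fun σ _ => measurableSet_cyl _
    have hPsum : ∀ m : ℕ, P (cyl (pref α1 m) ×ˢ V L) =
        ∑ σ ∈ G, P (cyl (pref α1 m) ×ˢ cyl (List.ofFn σ)) := by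
      intro m
      have : cyl (pref α1 m) ×ˢ V L =
          ⋃ σ ∈ G, cyl (pref α1 m) ×ˢ cyl (List.ofFn σ) := by
        rw [hVU]
        ext x
        simp only [mem_prod, mem_iUnion]
        tauto
      rw [this]
      refine measure_biUnion_finset ?_ fun σ _ =>
        (measurableSet_cyl _).prod (measurableSet_cyl _)
      intro σ hσ τ hτ hστ
      exact Set.disjoint_left.2 fun x hx hx' =>
        Set.disjoint_left.1 (hdisj hσ hτ hστ) hx.2 hx'.2
    have hcpos : ∀ m, 0 < (P1 (cyl (pref α1 m))).toReal :=
      fun m => ENNReal.toReal_pos (hpos m).ne' (measure_ne_top P1 _)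
    have htend : Tendsto
        (fun m : ℕ => (P (cyl (pref α1 m) ×ˢ V L)).toReal /
          (P1 (cyl (pref α1 m))).toReal)
        atTop (𝓝 ((Q (V L)).toReal)) := by
      have h1 : Tendsto (fun m : ℕ => ∑ σ ∈ G,
          (P (cyl (pref α1 m) ×ˢ cyl (List.ofFn σ))).toReal /
            (P1 (cyl (pref α1 m))).toReal)
          atTop (𝓝 (∑ σ ∈ G, (Q (cyl (List.ofFn σ))).toReal)) :=
        tendsto_finset_sum _ fun σ _ => hQ (List.ofFn σ)
      have e1 : (∑ σ ∈ G, (Q (cyl (List.ofFn σ))).toReal) = (Q (V L)).toReal := by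
        rw [hQsum, ENNReal.toReal_sum fun σ _ => measure_ne_top Q _]
      have e2 : ∀ m : ℕ, (∑ σ ∈ G,
          (P (cyl (pref α1 m) ×ˢ cyl (List.ofFn σ))).toReal /
            (P1 (cyl (pref α1 m))).toReal) =
          (P (cyl (pref α1 m) ×ˢ V L)).toReal / (P1 (cyl (pref α1 m))).toReal := by
        intro m
        rw [← Finset.sum_div, hPsum m,
          ENNReal.toReal_sum fun σ _ => measure_ne_top P _]
      rw [← e1]
      exact h1.congr e2
    have hev : ∀ᶠ m in atTop,
        (P (cyl (pref α1 m) ×ˢ V L)).toReal / (P1 (cyl (pref α1 m))).toReal ≤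
          (2⁻¹ : ℝ) ^ n := by
      have htube : ∀ σ ∈ G, ∀ᶠ m in atTop,
          cyl (pref α1 m) ×ˢ cyl (List.ofFn σ) ⊆ U := by
        intro σ hσ
        obtain ⟨M, hM⟩ := exists_tube hUopen α1 (isCompact_cyl _)
          (fun β hβ => (hGmem σ).1 hσ hβ)
        exact eventually_atTop.2 ⟨M, hM⟩
      filter_upwards [(eventually_all_finset G).2 htube] with m hm
      have hsub : cyl (pref α1 m) ×ˢ V L ⊆
          U ∩ (cyl (pref α1 m) ×ˢ (univ : Set Cantor)) := by
        rintro ⟨a, b⟩ ⟨ha, hb⟩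
        rw [hVU] at hb
        obtain ⟨σ, hσ, hbσ⟩ := mem_iUnion₂.1 hb
        exact ⟨hm σ hσ ⟨ha, hbσ⟩, ha, trivial⟩
      have h1 : P (cyl (pref α1 m) ×ˢ V L) ≤ 2⁻¹ ^ n * P1 (cyl (pref α1 m)) :=
        le_trans (measure_mono hsub) (hlight m)
      have h2 := ENNReal.toReal_mono
        (ENNReal.mul_ne_top (ENNReal.pow_ne_top (ENNReal.inv_ne_top.2 two_ne_zero)) (measure_ne_top P1 _)) h1
      rw [ENNReal.toReal_mul] at h2
      rw [div_le_iff₀ (hcpos m)]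
      convert h2 using 2
      · rfl
      simp [ENNReal.toReal_pow]
    have hreal : (Q (V L)).toReal ≤ (2⁻¹ : ℝ) ^ n := le_of_tendsto htend hev
    rw [← ENNReal.toReal_le_toReal (measure_ne_top Q _) (ENNReal.pow_ne_top (ENNReal.inv_ne_top.2 two_ne_zero))]
    convert hreal using 1
    simp [ENNReal.toReal_pow]
  calc Q S = ⨆ L, Q (V L) := by
        rw [hSV]; exact hVmono.directed_le.measure_iUnion
    _ ≤ 2⁻¹ ^ n := iSup_le key
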